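/- Let E be a directed graph, e_0 ∈ E^1 an edge, n ≥ 1, and let {s_e, p_v} be a Cuntz–Krieger E(e_0,n)-family in a C*-algebra, where E(e_0,n) is the graph obtained from E by subdividing e_0 into a path e_{n+1} e_n ⋯ e_1 through new vertices v_1, …, v_n. Define Q_v = p_v for v ∈ E^0 ∪ {v_1,…,v_n}, T_e = s_e for e ∈ E^1 \ {e_0} and e ∈ {e_1,…,e_n}, and T_{e_0} = s_{e_{n+1}} s_{e_n} ⋯ s_{e_1}. Then {T_e, Q_v} is a Cuntz–Krieger E(v_0,n)-family, where E(v_0,n) is the graph obtained from E by attaching a head of length n at v_0 = r(e_0). -/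

import Mathlib

/-- A directed graph: vertices, edges, source and range maps. -/
structure DGraph where
  V : Type
  E : Type
  s : E → V
  r : E → V

namespace DGraph

/-- A vertex is regular if it emits finitely many, but at least one, edge. -/
def Regular (G : DGraph) (v : G.V) : Prop :=
  {e : G.E | G.s e = v}.Finite ∧ {e : G.E | G.s e = v}.Nonempty

end DGraph

/-- A Cuntz–Krieger `G`-family in a C*-algebra `A`: mutually orthogonal projections
`P v` and partial isometries `S e` satisfying the Cuntz–Krieger relations
(CK0)–(CK3).  The inequality `S e (S e)* ≤ P (s e)` is encoded algebraically as
`P (s e) * (S e (S e)*) = S e (S e)*`. -/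
structure IsCKFamily (G : DGraph) {A : Type*} [NonUnitalCStarAlgebra A]
    (P : G.V → A) (S : G.E → A) : Prop where
  proj_idem : ∀ v : G.V, P v * P v = P v
  proj_star : ∀ v : G.V, star (P v) = P v
  orth : ∀ v w : G.V, v ≠ w → P v * P w = 0
  ck0 : ∀ e f : G.E, e ≠ f → star (S e) * S f = 0
  ck1 : ∀ e : G.E, star (S e) * S e = P (G.r e)
  ck2 : ∀ e : G.E, P (G.s e) * (S e * star (S e)) = S e * star (S e)
  ck3 : ∀ v : G.V, G.Regular v → P v = ∑ᶠ e ∈ {e : G.E | G.s e = v}, S e * star (S e)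

section Helpers
variable {G : DGraph} {A : Type*} [NonUnitalCStarAlgebra A] {P : G.V → A} {S : G.E → A}

theorem IsCKFamily.S_mul_P (h : IsCKFamily G P S) (e : G.E) : S e * P (G.r e) = S e := by
  set a := S e with ha
  set p := P (G.r e) with hp
  have h1 : star a * a = p := h.ck1 e
  have hidem : p * p = p := h.proj_idem _
  have hstar : star p = p := h.proj_star _
  have e1 : (p * star a) * (a * p) = p := by
    rw [mul_assoc, ← mul_assoc (star a), h1, hidem, hidem]
  have e2 : (p * star a) * a = p := by rw [mul_assoc, h1, hidem]
  have e3 : star a * (a * p) = p := by rw [← mul_assoc, h1, hidem]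
  have key : star (a * p - a) * (a * p - a) = 0 := by
    have hs : star (a * p - a) = p * star a - star a := by
      rw [star_sub, star_mul, hstar]
    rw [hs, sub_mul, mul_sub, mul_sub, e1, e2, e3, h1]
    simp
  have := (CStarRing.star_mul_self_eq_zero_iff _).mp key
  have h2 : a * p - a = 0 := this
  have := sub_eq_zero.mp h2
  exact this

theorem IsCKFamily.P_mul_S (h : IsCKFamily G P S) (e : G.E) : P (G.s e) * S e = S e :=
  calc P (G.s e) * S e = P (G.s e) * (S e * star (S e) * S e) := by
        rw [mul_assoc, h.ck1, h.S_mul_P]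
    _ = (P (G.s e) * (S e * star (S e))) * S e := by simp only [mul_assoc]
    _ = S e * star (S e) * S e := by rw [h.ck2]
    _ = S e := by rw [mul_assoc, h.ck1, h.S_mul_P]

end Helpers

open Classical in
/-- The graph `E(v₀,n)`: attach a head `vₙ → ⋯ → v₁ → v₀` of length `n` at the vertex
`v₀`.  New vertices are `Fin n` (index `i` is `v_{i+1}`) and new edges are `Fin n`
(index `i` is `e_{i+1} : v_{i+1} → v_i`). -/
noncomputable def headAttach (G : DGraph) (v0 : G.V) (n : ℕ) : DGraph where
  V := G.V ⊕ Fin n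
  E := G.E ⊕ Fin n
  s := Sum.elim (fun e => Sum.inl (G.s e)) (fun i => Sum.inr i)
  r := Sum.elim (fun e => Sum.inl (G.r e))
    (fun i => if h : (i : ℕ) = 0 then Sum.inl v0 else Sum.inr ⟨(i : ℕ) - 1, by omega⟩)

open Classical in
/-- The graph `E(e₀,n)`: subdivide the edge `e₀` into a path
`e_{n+1} e_n ⋯ e_1` through new vertices `v_1, …, v_n`.  New vertices are `Fin n`
(index `i` is `v_{i+1}`), new edges are `Fin (n+1)` (index `j` is `e_{j+1}`), with
`s(e_{j+1}) = v_{j+1}` for `j < n`, `s(e_{n+1}) = s(e₀)`, `r(e_1) = r(e₀)` and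
`r(e_{j+1}) = v_j` for `j ≥ 1`. -/
noncomputable def subdivide (G : DGraph) (e0 : G.E) (n : ℕ) : DGraph where
  V := G.V ⊕ Fin n
  E := {e : G.E // e ≠ e0} ⊕ Fin (n + 1)
  s := Sum.elim (fun e => Sum.inl (G.s e.1))
    (fun j => if h : (j : ℕ) < n then Sum.inr ⟨(j : ℕ), h⟩ else Sum.inl (G.s e0))
  r := Sum.elim (fun e => Sum.inl (G.r e.1))
    (fun j => if h : (j : ℕ) = 0 then Sum.inl (G.r e0)
      else Sum.inr ⟨(j : ℕ) - 1, by omega⟩)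

/-- `descProd f k = f k * f (k-1) * ⋯ * f 0`, a descending product. -/
def descProd {A : Type*} [Mul A] (f : ℕ → A) : ℕ → A
  | 0 => f 0
  | (k + 1) => f (k + 1) * descProd f k

open Classical Fin.NatCast in
/-- Let `{P, S}` be a Cuntz–Krieger `E(e₀,n)`-family.  Keeping all projections, keeping
the partial isometries of the edges other than `e₀`, and replacing `s_{e₀}` by the
product `s_{e_{n+1}} s_{e_n} ⋯ s_{e_1}`, one obtains a Cuntz–Krieger `E(v₀,n)`-family,
where `v₀ = r(e₀)`. -/
theorem subdivide_to_headAttach_family (G : DGraph) (e0 : G.E) (n : ℕ) (hn : 1 ≤ n)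
    {A : Type*} [NonUnitalCStarAlgebra A]
    (P : (subdivide G e0 n).V → A) (S : (subdivide G e0 n).E → A)
    (hfam : IsCKFamily (subdivide G e0 n) P S) :
    IsCKFamily (headAttach G (G.r e0) n)
      (P : G.V ⊕ Fin n → A)
      (Sum.elim
        (fun g : G.E =>
          if h : g = e0 then
            descProd (fun j => S (Sum.inr ((j : Fin (n + 1))))) n
          else S (Sum.inl ⟨g, h⟩))
        (fun i : Fin n => S (Sum.inr ⟨(i : ℕ), Nat.lt_succ_of_lt i.2⟩))) := by
  obtain ⟨m, rfl⟩ : ∃ m, n = m + 1 := ⟨n - 1, by omega⟩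
  clear hn
  set f : ℕ → A := fun j => S (Sum.inr ((j : Fin (m + 1 + 1)))) with hfdef
  -- basic graph computations
  have hf : ∀ (k : ℕ) (hk : k ≤ m + 1), f k = S (Sum.inr ⟨k, by omega⟩) := by
    intro k hk
    have hcast : ((k : ℕ) : Fin (m + 1 + 1)) = ⟨k, by omega⟩ :=
      Fin.ext (Fin.val_cast_of_lt (by omega))
    rw [hfdef]
    show S (Sum.inr ((k : ℕ) : Fin (m + 1 + 1))) = _
    rw [hcast]
  have hs_lt : ∀ (k : ℕ) (hk : k < m + 1),
      (subdivide G e0 (m + 1)).s (Sum.inr ⟨k, by omega⟩) = Sum.inr ⟨k, hk⟩ := by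
    intro k hk
    simp [subdivide, Nat.le_of_lt_succ hk]
  have hs_top : (subdivide G e0 (m + 1)).s (Sum.inr ⟨m + 1, by omega⟩) = Sum.inl (G.s e0) := by
    simp [subdivide]
  have hr_zero : (subdivide G e0 (m + 1)).r (Sum.inr ⟨0, by omega⟩) = Sum.inl (G.r e0) := by
    simp [subdivide]
  have hr_pos : ∀ (k : ℕ) (hk : k ≠ 0) (hk2 : k < m + 2),
      (subdivide G e0 (m + 1)).r (Sum.inr ⟨k, hk2⟩) = Sum.inr ⟨k - 1, by omega⟩ := by
    intro k hk hk2
    simp [subdivide, hk]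
  -- the vertex v_{l+1} has a unique outgoing edge
  have hsingle : ∀ (l : ℕ) (hl : l < m + 1),
      P (Sum.inr ⟨l, hl⟩) = f l * star (f l) := by
    intro l hl
    have hset : {e : (subdivide G e0 (m + 1)).E |
        (subdivide G e0 (m + 1)).s e = Sum.inr ⟨l, hl⟩} =
        {Sum.inr ⟨l, by omega⟩} := by
      ext e
      rcases e with ⟨g, hg⟩ | j
      · change (Sum.inl (G.s g) : G.V ⊕ Fin (m + 1)) = Sum.inr ⟨l, hl⟩ ↔ (Sum.inl ⟨g, hg⟩ : {e : G.E // e ≠ e0} ⊕ Fin (m + 1 + 1)) = Sum.inr ⟨l, by omega⟩; simp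
      · change (if h : (j : ℕ) < m + 1 then (Sum.inr ⟨(j : ℕ), h⟩ : G.V ⊕ Fin (m + 1)) else Sum.inl (G.s e0)) = Sum.inr ⟨l, hl⟩ ↔ (Sum.inr j : {e : G.E // e ≠ e0} ⊕ Fin (m + 1 + 1)) = Sum.inr ⟨l, by omega⟩
        by_cases hj : (j : ℕ) < m + 1
        · erw [dif_pos hj]
          simp [Sum.inr.injEq, Fin.ext_iff]
        · erw [dif_neg hj]
          simp only [Sum.inr.injEq, Fin.ext_iff]
          constructor
          · intro h; exact absurd h (by simp)
          · intro h; omega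
    have hreg : (subdivide G e0 (m + 1)).Regular (Sum.inr ⟨l, hl⟩) := by
      show Set.Finite _ ∧ Set.Nonempty _; rw [hset]
      exact ⟨Set.finite_singleton _, ⟨_, rfl⟩⟩
    erw [hfam.ck3 _ hreg, hset, finsum_mem_singleton, hf l (by omega)]
  -- P at the source of the top factor of descProd absorbs
  have hPD : ∀ (k : ℕ) (hk : k < m + 1),
      P (Sum.inr ⟨k, hk⟩) * descProd f k = descProd f k := by
    intro k hk
    have key : P (Sum.inr ⟨k, hk⟩) * f k = f k := by
      have h1 := hfam.P_mul_S (Sum.inr ⟨k, by omega⟩)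
      rw [hs_lt k hk] at h1
      rw [hf k (by omega)]
      exact h1
    cases k with
    | zero => exact key
    | succ l =>
      show P _ * (f (l + 1) * descProd f l) = _
      rw [← mul_assoc, key]
      rfl
  have hDstar : ∀ k : ℕ, k ≤ m + 1 →
      star (descProd f k) * descProd f k = P (Sum.inl (G.r e0)) := by
    intro k
    induction k with
    | zero =>
      intro _
      show star (f 0) * f 0 = _
      erw [hf 0 (by omega), hfam.ck1, hr_zero]
    | succ l ih =>
      intro hl
      show star (f (l + 1) * descProd f l) * (f (l + 1) * descProd f l) = _
      erw [star_mul, mul_assoc, ← mul_assoc (star (f (l + 1))), hf (l + 1) hl, hfam.ck1,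
        hr_pos (l + 1) (by omega) (by omega)]
      simp only [Nat.add_sub_cancel]
      rw [← mul_assoc, mul_assoc (star (descProd f l))]
      rw [hPD l (by omega), ih (by omega)]
  have hDD : ∀ k : ℕ, k ≤ m + 1 →
      descProd f k * star (descProd f k) = f k * star (f k) := by
    intro k
    induction k with
    | zero => intro _; rfl
    | succ l ih =>
      intro hl
      show (f (l + 1) * descProd f l) * star (f (l + 1) * descProd f l) = _
      rw [star_mul, mul_assoc, ← mul_assoc (descProd f l), ih (by omega)]
      rw [← hsingle l (by omega), ← mul_assoc]
      have key : f (l + 1) * P (Sum.inr ⟨l, by omega⟩) = f (l + 1) := by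
        have h1 := hfam.S_mul_P (Sum.inr ⟨l + 1, by omega⟩)
        rw [hr_pos (l + 1) (by omega) (by omega)] at h1
        simp only [Nat.add_sub_cancel] at h1
        rw [hf (l + 1) hl]
        exact h1
      rw [key]
  have hzero_left : ∀ x : A, star (f (m + 1)) * x = 0 →
      star (descProd f (m + 1)) * x = 0 := by
    intro x hx
    show star (f (m + 1) * descProd f m) * x = 0
    rw [star_mul, mul_assoc, hx, mul_zero]
  have hzero_right : ∀ x : A, x * f (m + 1) = 0 →
      x * descProd f (m + 1) = 0 := by
    intro x hx
    show x * (f (m + 1) * descProd f m) = 0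
    rw [← mul_assoc, hx, zero_mul]
  refine ⟨hfam.proj_idem, hfam.proj_star, hfam.orth, ?_, ?_, ?_, ?_⟩
  · -- CK0
    intro e e' hne
    rcases e with g | i <;> rcases e' with g' | i' <;>
      simp only [Sum.elim_inl, Sum.elim_inr]
    · by_cases hg : g = e0 <;> by_cases hg' : g' = e0
      · exact absurd (by rw [hg, hg']) hne
      · rw [dif_pos hg, dif_neg hg']
        refine hzero_left _ ?_
        rw [hf (m + 1) le_rfl]
        exact hfam.ck0 _ _ Sum.inr_ne_inl
      · rw [dif_neg hg, dif_pos hg']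
        refine hzero_right _ ?_
        rw [hf (m + 1) le_rfl]
        exact hfam.ck0 _ _ Sum.inl_ne_inr
      · rw [dif_neg hg, dif_neg hg']
        have hgg' : g ≠ g' := fun h => hne (by rw [h])
        exact hfam.ck0 _ _
          (fun hEq => hgg' (congrArg Subtype.val (Sum.inl_injective hEq)))
    · by_cases hg : g = e0
      · rw [dif_pos hg]
        refine hzero_left _ ?_
        rw [hf (m + 1) le_rfl]
        refine hfam.ck0 _ _ ?_
        intro hEq
        have h2 : m + 1 = (i' : ℕ) := congrArg Fin.val (Sum.inr_injective hEq)
        have := i'.2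
        omega
      · rw [dif_neg hg]
        exact hfam.ck0 _ _ Sum.inl_ne_inr
    · by_cases hg' : g' = e0
      · rw [dif_pos hg']
        refine hzero_right _ ?_
        rw [hf (m + 1) le_rfl]
        refine hfam.ck0 _ _ ?_
        intro hEq
        have h2 : (i : ℕ) = m + 1 := congrArg Fin.val (Sum.inr_injective hEq)
        have := i.2
        omega
      · rw [dif_neg hg']
        exact hfam.ck0 _ _ Sum.inr_ne_inl
    · have hii' : i ≠ i' := fun h => hne (by rw [h])
      refine hfam.ck0 _ _ ?_
      intro hEq
      have h2 : (i : ℕ) = (i' : ℕ) := congrArg (Fin.val : Fin (m + 1 + 1) → ℕ) (Sum.inr_injective hEq)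
      exact hii' (Fin.ext h2)
  · -- CK1
    intro e
    rcases e with g | i <;> simp only [Sum.elim_inl, Sum.elim_inr]
    · by_cases hg : g = e0
      · rw [dif_pos hg]
        subst hg
        exact hDstar (m + 1) le_rfl
      · rw [dif_neg hg]
        exact hfam.ck1 (Sum.inl ⟨g, hg⟩)
    · have h1 := hfam.ck1 (Sum.inr ⟨(i : ℕ), Nat.lt_succ_of_lt i.2⟩)
      rw [h1]
      by_cases hi : (i : ℕ) = 0
      · have hr1 : (subdivide G e0 (m + 1)).r (Sum.inr ⟨(i : ℕ), Nat.lt_succ_of_lt i.2⟩)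
            = Sum.inl (G.r e0) := by simp [subdivide, hi]
        have hr2 : (headAttach G (G.r e0) (m + 1)).r (Sum.inr i) = Sum.inl (G.r e0) := by
          simp [headAttach, (Fin.ext hi : i = 0)]
        rw [hr1, hr2]
      · have hr1 : (subdivide G e0 (m + 1)).r (Sum.inr ⟨(i : ℕ), Nat.lt_succ_of_lt i.2⟩)
            = Sum.inr ⟨(i : ℕ) - 1, by have := i.2; omega⟩ := by simp [subdivide, hi]
        have hr2 : (headAttach G (G.r e0) (m + 1)).r (Sum.inr i)
            = Sum.inr ⟨(i : ℕ) - 1, by have := i.2; omega⟩ := by simp only [headAttach, Sum.elim_inr, dif_neg hi]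
        rw [hr1, hr2]
  · -- CK2
    intro e
    rcases e with g | i <;> simp only [Sum.elim_inl, Sum.elim_inr]
    · by_cases hg : g = e0
      · simp only [dif_pos hg]
        subst hg
        have key : P (Sum.inl (G.s g)) * f (m + 1) = f (m + 1) := by
          have h1 := hfam.P_mul_S (Sum.inr ⟨m + 1, by omega⟩)
          rw [hs_top] at h1
          rw [hf (m + 1) le_rfl]
          exact h1
        show P (Sum.inl (G.s g)) *
          ((f (m + 1) * descProd f m) * star (descProd f (m + 1))) = _
        rw [← mul_assoc, ← mul_assoc, key]
        rfl
      · simp only [dif_neg hg]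
        exact hfam.ck2 (Sum.inl ⟨g, hg⟩)
    · have h1 := hfam.ck2 (Sum.inr ⟨(i : ℕ), Nat.lt_succ_of_lt i.2⟩)
      rw [hs_lt (i : ℕ) i.2] at h1
      exact h1
  · -- CK3
    intro v hv
    rcases v with w | i
    · -- old vertex
      set psi : G.E → (subdivide G e0 (m + 1)).E :=
        fun g => if h : g = e0 then Sum.inr ⟨m + 1, by omega⟩ else Sum.inl ⟨g, h⟩ with hpsi
      have hbij1 : Set.BijOn (Sum.inl : G.E → (headAttach G (G.r e0) (m + 1)).E)
          {g | G.s g = w}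
          {e | (headAttach G (G.r e0) (m + 1)).s e = Sum.inl w} := by
        refine ⟨?_, ?_, ?_⟩
        · intro g hg
          simpa [headAttach] using hg
        · exact fun a _ b _ h => Sum.inl_injective h
        · intro e he
          rcases e with g | j
          · exact ⟨g, by simpa [headAttach] using he, rfl⟩
          · simp [headAttach] at he
      have hbij2 : Set.BijOn psi {g | G.s g = w}
          {e | (subdivide G e0 (m + 1)).s e = Sum.inl w} := by
        refine ⟨?_, ?_, ?_⟩
        · intro g hg
          simp only [Set.mem_setOf_eq] at hg ⊢
          by_cases h : g = e0
          · rw [hpsi]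
            beta_reduce; erw [dif_pos h]
            rw [hs_top, ← h, hg]
          · rw [hpsi]
            beta_reduce; erw [dif_neg h]
            show Sum.inl (G.s g) = Sum.inl w
            rw [hg]
        · intro a _ b _ hab
          rw [hpsi] at hab
          simp only at hab
          by_cases ha : a = e0 <;> by_cases hb : b = e0
          · rw [ha, hb]
          · erw [dif_pos ha, dif_neg hb] at hab; exact absurd hab (by simp [subdivide])
          · erw [dif_neg ha, dif_pos hb] at hab; exact absurd hab (by simp [subdivide])
          · erw [dif_neg ha, dif_neg hb] at hab
            exact congrArg Subtype.val (Sum.inl_injective hab)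
        · intro e he
          simp only [Set.mem_setOf_eq] at he
          rcases e with ⟨g, hg⟩ | j
          · refine ⟨g, ?_, ?_⟩
            · simpa [subdivide] using he
            · rw [hpsi]; simp [hg]; rfl
          · by_cases hj : (j : ℕ) < m + 1
            · exact absurd he (by simp [subdivide, Nat.le_of_lt_succ hj])
            · have hjv : (j : ℕ) = m + 1 := by have := j.2; omega
              have hse : G.s e0 = w := by
                have : (subdivide G e0 (m + 1)).s (Sum.inr j) = Sum.inl (G.s e0) := by
                  simp [subdivide, show ¬ (j : ℕ) ≤ m by omega]
                rw [this] at he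
                exact Sum.inl_injective he
              refine ⟨e0, hse, ?_⟩
              rw [hpsi]
              beta_reduce; erw [dif_pos rfl]
              exact congrArg Sum.inr (Fin.ext (show m + 1 = (j : ℕ) from by omega))
      have hGfin : {g : G.E | G.s g = w}.Finite := by
        refine Set.Finite.of_finite_image
          (f := (Sum.inl : G.E → (headAttach G (G.r e0) (m + 1)).E)) ?_
          (Set.injOn_of_injective Sum.inl_injective)
        rw [hbij1.image_eq]
        exact hv.1
      have hGne : {g : G.E | G.s g = w}.Nonempty := by
        obtain ⟨e, he⟩ := hv.2
        obtain ⟨g, hg, -⟩ := hbij1.2.2 he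
        exact ⟨g, hg⟩
      have hreg' : (subdivide G e0 (m + 1)).Regular (Sum.inl w) := by
        constructor
        · rw [← hbij2.image_eq]
          exact hGfin.image psi
        · rw [← hbij2.image_eq]
          exact hGne.image psi
      refine Eq.trans ?_ (finsum_mem_eq_of_bijOn Sum.inl hbij1 (fun g _ => rfl))
      refine Eq.trans (hfam.ck3 _ hreg') ?_
      symm
      refine finsum_mem_eq_of_bijOn psi hbij2 ?_
      intro g hg
      simp only [Sum.elim_inl]
      by_cases h : g = e0
      · rw [hpsi]
        beta_reduce; erw [dif_pos h, dif_pos h]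
        rw [hDD (m + 1) le_rfl, hf (m + 1) le_rfl]
      · rw [hpsi]
        beta_reduce; erw [dif_neg h, dif_neg h]
    · -- new vertex
      have hsetH : {e : (headAttach G (G.r e0) (m + 1)).E |
          (headAttach G (G.r e0) (m + 1)).s e = Sum.inr i} = {Sum.inr i} := by
        ext e
        rcases e with g | j
        · change (Sum.inl (G.s g) : G.V ⊕ Fin (m + 1)) = Sum.inr i ↔ (Sum.inl g : G.E ⊕ Fin (m + 1)) = Sum.inr i; simp
        · change (Sum.inr j : G.V ⊕ Fin (m + 1)) = Sum.inr i ↔ (Sum.inr j : G.E ⊕ Fin (m + 1)) = Sum.inr i; simp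
      erw [hsetH, finsum_mem_singleton]
      simp only [Sum.elim_inr]
      have h1 := hsingle (i : ℕ) i.2
      rw [hf (i : ℕ) (by omega)] at h1
      exact h1
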